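/- Let A and B be finite alphabets, let n ∈ ℕ, let F be the cyclic group of order n with generator x, and let φ : A* → F and ψ : B* → F be monoid homomorphisms such that φ(a) = x^p for every a ∈ A and ψ(b) = x^q for every b ∈ B, where 1 ≤ p,q ≤ n and gcd(p,n) = gcd(q,n) = 1. Then the fiber product Π(φ,ψ) equals {(u,v) ∈ A* × B* : p·|u| ≡ q·|v| (mod n)}, and it is generated as a monoid by the finite set X = {(u,v) ∈ A* × B* : p·|u| ≡ q·|v| (mod n), 0 ≤ |u|,|v| ≤ n} \ {(u,v) : |u| = |v| = n}. -/

import Mathlib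

/-- The fiber product of two monoid homomorphisms with common codomain,
as a submonoid of the direct product. -/
def fiberSubmonoid {S T F : Type*} [Monoid S] [Monoid T] [Monoid F]
    (φ : S →* F) (ψ : T →* F) : Submonoid (S × T) where
  carrier := {p | φ p.1 = ψ p.2}
  mul_mem' := by
    intro a b ha hb
    simp only [Set.mem_setOf_eq, Prod.fst_mul, Prod.snd_mul, map_mul] at *
    rw [ha, hb]
  one_mem' := by simp

/-- The generating set `X` of Theorem 2.4: pairs of words `(u,v)` with
`p·|u| ≡ q·|v| (mod n)`, `0 ≤ |u|,|v| ≤ n`, excluding those with `|u| = |v| = n`. -/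
def genSet (A B : Type) (n p q : ℕ) : Set (FreeMonoid A × FreeMonoid B) :=
  {uv | (p * uv.1.length ≡ q * uv.2.length [MOD n]) ∧
        uv.1.length ≤ n ∧ uv.2.length ≤ n ∧ ¬(uv.1.length = n ∧ uv.2.length = n)}

/-- for the cyclic group `F` of order `n` with generator `x`, and
homomorphisms sending every letter of `A` to `x^p` and every letter of `B` to
`x^q` (with `1 ≤ p,q ≤ n` coprime to `n`), the fiber product is
`{(u,v) : p·|u| ≡ q·|v| (mod n)}` and it is generated by the finite set `genSet`. -/

lemma eval_pow {A F : Type} [Group F] (p : ℕ) (x : F) (φ : FreeMonoid A →* F)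
    (hφ : ∀ a : A, φ (FreeMonoid.of a) = x ^ p) (u : FreeMonoid A) :
    φ u = x ^ (p * u.length) := by
  induction u using FreeMonoid.inductionOn' with
  | one => simp
  | of_mul a u ih =>
      rw [map_mul, hφ, ih, ← pow_add, FreeMonoid.length_mul, FreeMonoid.length_of]
      ring_nf

theorem stmt4 {A B F : Type} [Finite A] [Finite B] [Group F]
    (n p q : ℕ) (x : F)
    (hgen : ∀ y : F, ∃ k : ℕ, x ^ k = y) (hord : orderOf x = n)
    (hp1 : 1 ≤ p) (hpn : p ≤ n) (hq1 : 1 ≤ q) (hqn : q ≤ n)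
    (hpcop : Nat.gcd p n = 1) (hqcop : Nat.gcd q n = 1)
    (φ : FreeMonoid A →* F) (ψ : FreeMonoid B →* F)
    (hφ : ∀ a : A, φ (FreeMonoid.of a) = x ^ p)
    (hψ : ∀ b : B, ψ (FreeMonoid.of b) = x ^ q) :
    (∀ uv : FreeMonoid A × FreeMonoid B,
        uv ∈ fiberSubmonoid φ ψ ↔ p * uv.1.length ≡ q * uv.2.length [MOD n]) ∧
    (genSet A B n p q).Finite ∧
    Submonoid.closure (genSet A B n p q) = fiberSubmonoid φ ψ := by
  have hn1 : 1 ≤ n := le_trans hp1 hpn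
  have hmem : ∀ uv : FreeMonoid A × FreeMonoid B,
      uv ∈ fiberSubmonoid φ ψ ↔ p * uv.1.length ≡ q * uv.2.length [MOD n] := by
    intro uv
    show φ uv.1 = ψ uv.2 ↔ _
    rw [eval_pow p x φ hφ, eval_pow q x ψ hψ, pow_eq_pow_iff_modEq, hord]
  refine ⟨hmem, ?_, ?_⟩
  · apply Set.Finite.subset (Set.Finite.prod
      (List.finite_length_le A n) (List.finite_length_le B n))
    rintro ⟨u, v⟩ ⟨-, hu, hv, -⟩
    exact ⟨hu, hv⟩
  · apply le_antisymm
    · rw [Submonoid.closure_le]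
      rintro ⟨u, v⟩ ⟨h, -⟩
      exact (hmem _).2 h
    · rintro ⟨u, v⟩ huv
      have h := (hmem _).1 huv
      clear huv
      -- strong induction on total length
      generalize hm : u.length + v.length = m
      induction m using Nat.strong_induction_on generalizing u v with
      | _ m ih =>
        by_cases hcase : u.length ≤ n ∧ v.length ≤ n ∧ ¬(u.length = n ∧ v.length = n)
        · exact Submonoid.subset_closure ⟨h, hcase⟩
        · -- then u.length ≥ n or v.length ≥ n, with total length > n
          push_neg at hcase
          rcases le_or_gt u.length n with hu | hu
          · rcases le_or_gt v.length n with hv | hv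
            · -- both = n
              obtain ⟨hun, hvn⟩ := hcase hu hv
              -- split: (u, 1) * (1, v)
              have h1 : ((u, 1) : FreeMonoid A × FreeMonoid B) ∈ genSet A B n p q := by
                refine ⟨?_, hu, by simp [FreeMonoid.length_one], ?_⟩
                · show p * u.length ≡ q * (1 : FreeMonoid B).length [MOD n]
                  rw [hun, FreeMonoid.length_one, Nat.mul_zero]
                  unfold Nat.ModEq; simp [Nat.mul_mod_left]
                · intro ⟨_, h2⟩
                  rw [FreeMonoid.length_one] at h2; omega
              have h2 : ((1, v) : FreeMonoid A × FreeMonoid B) ∈ genSet A B n p q := by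
                refine ⟨?_, by simp [FreeMonoid.length_one], hv, ?_⟩
                · show p * (1 : FreeMonoid A).length ≡ q * v.length [MOD n]
                  rw [hvn, FreeMonoid.length_one, Nat.mul_zero]
                  unfold Nat.ModEq; simp [Nat.mul_mod_left]
                · intro ⟨h2, _⟩
                  rw [FreeMonoid.length_one] at h2; omega
              have : ((u, v) : FreeMonoid A × FreeMonoid B) = (u, 1) * (1, v) := by
                simp [Prod.ext_iff]
              rw [this]
              exact mul_mem (Submonoid.subset_closure h1) (Submonoid.subset_closure h2)
            · -- v.length > n : split v = v₁ * v₂ with |v₁| = n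
              set v₁ : FreeMonoid B := FreeMonoid.ofList (FreeMonoid.toList v |>.take n)
              set v₂ : FreeMonoid B := FreeMonoid.ofList (FreeMonoid.toList v |>.drop n)
              have hv1 : v₁.length = n := by
                show (List.take n (FreeMonoid.toList v)).length = n
                rw [List.length_take]
                exact min_eq_left hv.le
              have hsplit : v = v₁ * v₂ := by
                simp [v₁, v₂, ← FreeMonoid.ofList_append]
              have hg : ((1, v₁) : FreeMonoid A × FreeMonoid B) ∈ genSet A B n p q := by
                refine ⟨?_, by simp [FreeMonoid.length_one], le_of_eq hv1, ?_⟩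
                · show p * (1 : FreeMonoid A).length ≡ q * v₁.length [MOD n]
                  rw [hv1, FreeMonoid.length_one, Nat.mul_zero]
                  unfold Nat.ModEq; simp [Nat.mul_mod_left]
                · intro ⟨h2, _⟩
                  rw [FreeMonoid.length_one] at h2; omega
              have hrest : p * u.length ≡ q * v₂.length [MOD n] := by
                have hlen : v.length = n + v₂.length := by
                  have := congrArg FreeMonoid.length hsplit
                  rw [FreeMonoid.length_mul, hv1] at this
                  omega
                have : q * v.length = q * n + q * v₂.length := by rw [hlen]; ring
                calc p * u.length ≡ q * v.length [MOD n] := h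
                  _ = q * n + q * v₂.length := this
                  _ ≡ 0 + q * v₂.length [MOD n] := Nat.ModEq.add_right _ (by
                        unfold Nat.ModEq; simp [Nat.mul_mod_right])
                  _ = q * v₂.length := by ring
              have : ((u, v) : FreeMonoid A × FreeMonoid B) = (1, v₁) * (u, v₂) := by
                simp [Prod.ext_iff, hsplit]
              rw [this]
              refine mul_mem (Submonoid.subset_closure hg) (ih (u.length + v₂.length) ?_ u v₂ hrest rfl)
              have hlen : v.length = n + v₂.length := by
                have := congrArg FreeMonoid.length hsplit
                rw [FreeMonoid.length_mul, hv1] at this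
                omega
              omega
          · -- u.length > n : split u = u₁ * u₂
            set u₁ : FreeMonoid A := FreeMonoid.ofList (FreeMonoid.toList u |>.take n)
            set u₂ : FreeMonoid A := FreeMonoid.ofList (FreeMonoid.toList u |>.drop n)
            have hu1 : u₁.length = n := by
              show (List.take n (FreeMonoid.toList u)).length = n
              rw [List.length_take]
              exact min_eq_left hu.le
            have hsplit : u = u₁ * u₂ := by
              simp [u₁, u₂, ← FreeMonoid.ofList_append]
            have hg : ((u₁, 1) : FreeMonoid A × FreeMonoid B) ∈ genSet A B n p q := by
              refine ⟨?_, le_of_eq hu1, by simp [FreeMonoid.length_one], ?_⟩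
              · show p * u₁.length ≡ q * (1 : FreeMonoid B).length [MOD n]
                rw [hu1, FreeMonoid.length_one, Nat.mul_zero]
                unfold Nat.ModEq; simp [Nat.mul_mod_left]
              · intro ⟨_, h2⟩
                rw [FreeMonoid.length_one] at h2; omega
            have hlen : u.length = n + u₂.length := by
              have := congrArg FreeMonoid.length hsplit
              rw [FreeMonoid.length_mul, hu1] at this
              omega
            have hrest : p * u₂.length ≡ q * v.length [MOD n] := by
              have h2 : p * u.length = p * n + p * u₂.length := by rw [hlen]; ring
              calc p * u₂.length = 0 + p * u₂.length := by ring
                _ ≡ p * n + p * u₂.length [MOD n] := Nat.ModEq.add_right _ (by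
                      unfold Nat.ModEq; simp [Nat.mul_mod_right])
                _ = p * u.length := h2.symm
                _ ≡ q * v.length [MOD n] := h
            have : ((u, v) : FreeMonoid A × FreeMonoid B) = (u₁, 1) * (u₂, v) := by
              simp [Prod.ext_iff, hsplit]
            rw [this]
            exact mul_mem (Submonoid.subset_closure hg)
              (ih (u₂.length + v.length) (by omega) u₂ v hrest rfl)
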